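/- Let λ = 1/β_n where β_n is the largest real root of x^n - x^{n-1} - ... - x + 1 for some n ≥ 5, and consider the IFS {S_1(x)=λx-1, S_2(x)=λx+1}. Then the two words of length n+1, I = 1 2^{n-1} 1 and J = 2 1^{n-1} 2 (i.e., I starts and ends with 1 with n-1 twos in between, J starts and ends with 2 with n-1 ones in between), satisfy S_{I} = S_{J} as affine maps, and 2/2^{n+1} > λ^{n+1}. -/

import Mathlib

open Finset

private lemma sumIcc_pow (x : ℝ) (n : ℕ) (hn : 1 ≤ n) :
    ∑ k ∈ Finset.Icc 1 (n - 1), x ^ k = x * ∑ k ∈ Finset.range (n - 1), x ^ k := by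
  rw [← Finset.Ico_add_one_right_eq_Icc, Nat.sub_add_cancel hn,
    Finset.sum_Ico_eq_sum_range, Finset.mul_sum]
  exact Finset.sum_congr rfl fun i _ => by rw [pow_add, pow_one]

private lemma iter_affine (a b : ℝ) (m : ℕ) (x : ℝ) :
    (fun y => a * y + b)^[m] x = a ^ m * x + b * ∑ k ∈ Finset.range m, a ^ k := by
  induction m with
  | zero => simp
  | succ m ih =>
    rw [Function.iterate_succ_apply', ih, geom_sum_succ]
    ring

private lemma nat_ineq1 (n : ℕ) (hn : 5 ≤ n) : 8 * n ≤ 2 ^ n + 8 := by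
  induction n, hn using Nat.le_induction with
  | base => norm_num
  | succ m hm ih =>
    have h8 : (8:ℕ) ≤ 2 ^ m := by
      calc (8:ℕ) ≤ 2 ^ 5 := by norm_num
      _ ≤ 2 ^ m := Nat.pow_le_pow_right (by norm_num) hm
    rw [pow_succ]
    omega

private lemma nat_ineq2 (n : ℕ) (hn : 5 ≤ n) : 4 * n + 5 ≤ 2 ^ n := by
  induction n, hn using Nat.le_induction with
  | base => norm_num
  | succ m hm ih =>
    have h8 : (8:ℕ) ≤ 2 ^ m := by
      calc (8:ℕ) ≤ 2 ^ 5 := by norm_num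
      _ ≤ 2 ^ m := Nat.pow_le_pow_right (by norm_num) hm
    rw [pow_succ]
    omega

theorem word_coincidence_salem (n : ℕ) (hn : 5 ≤ n) (β lam : ℝ)
    (hβ : IsGreatest {x : ℝ | x ^ n - ∑ k ∈ Finset.Icc 1 (n - 1), x ^ k + 1 = 0} β)
    (hlam : lam = 1 / β) :
    let S₁ : ℝ → ℝ := fun x => lam * x - 1
    let S₂ : ℝ → ℝ := fun x => lam * x + 1
    (S₁ ∘ S₂^[n - 1] ∘ S₁ = S₂ ∘ S₁^[n - 1] ∘ S₂) ∧
      2 / 2 ^ (n + 1) > lam ^ (n + 1) := by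
  intro S₁ S₂
  have hn1 : 1 ≤ n := by omega
  have h2n : (32:ℝ) ≤ 2 ^ n := by
    calc (32:ℝ) = 2 ^ 5 := by norm_num
    _ ≤ 2 ^ n := pow_le_pow_right₀ (by norm_num) hn
  have h2npos : (0:ℝ) < 2 ^ n := by positivity
  obtain ⟨f, hf⟩ : ∃ f : ℝ → ℝ, f = fun x => x ^ n - ∑ k ∈ Finset.Icc 1 (n - 1), x ^ k + 1 :=
    ⟨_, rfl⟩
  have hfcont : Continuous f := by
    rw [hf]
    apply Continuous.add
    · exact (continuous_pow n).sub (continuous_finset_sum _ fun i _ => continuous_pow i)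
    · exact continuous_const
  have hclosed : ∀ x : ℝ, (x - 1) * f x = x ^ (n + 1) - 2 * x ^ n + 2 * x - 1 := by
    intro x
    have hgeom : (∑ k ∈ Finset.range (n - 1), x ^ k) * (x - 1) = x ^ (n - 1) - 1 :=
      geom_sum_mul x (n - 1)
    have hpow : x ^ (n - 1) * x = x ^ n := by
      rw [← pow_succ, Nat.sub_add_cancel hn1]
    have hpow2 : x ^ n * x = x ^ (n + 1) := (pow_succ x n).symm
    simp only [hf, sumIcc_pow x n hn1]
    linear_combination (-x) * hgeom - hpow + hpow2
  obtain ⟨c, hc⟩ : ∃ c : ℝ, c = 2 - 4 / 2 ^ n := ⟨_, rfl⟩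
  have hc1 : (15:ℝ)/8 ≤ c := by
    have h : 4 / (2:ℝ) ^ n ≤ 1 / 8 := by
      rw [div_le_iff₀ h2npos]; linarith
    rw [hc]; linarith
  have hcpos : (0:ℝ) < c := by linarith
  have hcn : ∀ m : ℕ, (2:ℝ) ^ m * (1 + (m:ℝ) * (-(2 / 2 ^ n))) ≤ c ^ m := by
    intro m
    have ha : (2:ℝ) / 2 ^ n ≤ 2 := by rw [div_le_iff₀ h2npos]; linarith
    have hber := one_add_mul_le_pow (a := -(2 / 2 ^ n)) (neg_le_neg ha) m
    have hcc : c = 2 * (1 + -(2 / 2 ^ n)) := by rw [hc]; field_simp; ring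
    calc (2:ℝ) ^ m * (1 + (m:ℝ) * (-(2 / 2 ^ n)))
        ≤ 2 ^ m * (1 + -(2 / 2 ^ n)) ^ m := by
          nlinarith [hber, pow_nonneg (by norm_num : (0:ℝ) ≤ 2) m]
      _ = c ^ m := by rw [hcc, mul_pow]
  -- f c ≤ 0
  have hfc : f c ≤ 0 := by
    have h5 : (2:ℝ) ^ n - 2 * n ≤ c ^ n := by
      have h3 := hcn n
      have h4 : (2:ℝ) ^ n * (1 + (n:ℝ) * (-(2 / 2 ^ n))) = 2 ^ n - 2 * n := by
        field_simp; ring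
      linarith [h4 ▸ h3]
    have h6 : 8 * (n:ℝ) ≤ 2 ^ n + 8 := by exact_mod_cast nat_ineq1 n hn
    have hcE : c * 2 ^ n = 2 * 2 ^ n - 4 := by rw [hc]; field_simp
    have h8 : c ^ (n+1) * 2 ^ n = c ^ n * (2 * 2 ^ n - 4) := by
      rw [pow_succ, mul_assoc, hcE]
    have key : (c ^ (n+1) - 2 * c ^ n + 2 * c - 1) * 2 ^ n ≤ 0 := by
      nlinarith [h5, h6, h8, hcE, h2npos]
    have hq : c ^ (n+1) - 2 * c ^ n + 2 * c - 1 ≤ 0 := by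
      have := (mul_le_mul_iff_left₀ h2npos).mp (by linarith [key] :
        (c ^ (n+1) - 2 * c ^ n + 2 * c - 1) * 2 ^ n ≤ 0 * 2 ^ n)
      linarith [this]
    nlinarith [hclosed c, hq, hc1]
  have hf2 : f 2 = 3 := by
    have h := hclosed 2
    rw [pow_succ] at h
    linarith [h]
  have hc2 : c ≤ 2 := by
    have : (0:ℝ) < 4 / 2 ^ n := by positivity
    linarith
  obtain ⟨x₀, hx₀mem, hx₀⟩ : ∃ x₀ ∈ Set.Icc c 2, f x₀ = 0 :=
    intermediate_value_Icc hc2 hfcont.continuousOn ⟨hfc, by rw [hf2]; norm_num⟩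
  have hx₀' : x₀ ∈ {x : ℝ | x ^ n - ∑ k ∈ Finset.Icc 1 (n - 1), x ^ k + 1 = 0} := by
    rw [hf] at hx₀; exact hx₀
  have hβc : c ≤ β := le_trans hx₀mem.1 (hβ.2 hx₀')
  have hβ1 : (1:ℝ) < β := by linarith
  have hβ0 : β ≠ 0 := by linarith
  have hβroot : β ^ (n + 1) - 2 * β ^ n + 2 * β - 1 = 0 := by
    have h1 : f β = 0 := by rw [hf]; exact hβ.1
    have h2 := hclosed β
    rw [h1, mul_zero] at h2
    linarith
  have hβpos : (0:ℝ) < β := by linarith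
  have hlampos : 0 < lam := by rw [hlam]; exact one_div_pos.mpr hβpos
  have hlamlt : lam < 1 := by rw [hlam, div_lt_one hβpos]; exact hβ1
  have hlamβ : lam * β = 1 := by rw [hlam, one_div, inv_mul_cancel₀ hβ0]
  have hpowa : lam ^ (n+1) * β ^ (n+1) = 1 := by rw [← mul_pow, hlamβ, one_pow]
  have hpowb : lam ^ (n+1) * β ^ n = lam := by
    rw [show lam ^ (n+1) = lam * lam ^ n by rw [pow_succ]; ring,
      mul_assoc, ← mul_pow, hlamβ, one_pow, mul_one]
  have hpowc : lam ^ (n+1) * β = lam ^ n := by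
    rw [pow_succ, mul_assoc, hlamβ, mul_one]
  have hlamroot : lam ^ (n + 1) - 2 * lam ^ n + 2 * lam - 1 = 0 := by
    have e : lam ^ (n+1) * (β ^ (n+1) - 2 * β ^ n + 2 * β - 1) = 0 := by
      rw [hβroot, mul_zero]
    linear_combination -e + hpowa - 2 * hpowb + 2 * hpowc
  have hflam : f lam = 0 := by
    have h2 := hclosed lam
    have hne : lam - 1 ≠ 0 := by linarith
    have h3 : (lam - 1) * f lam = 0 := by rw [h2]; linarith [hlamroot]
    exact (mul_eq_zero.mp h3).resolve_left hne
  have hkey : lam * ∑ k ∈ Finset.range (n - 1), lam ^ k = lam ^ n + 1 := by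
    have hs := sumIcc_pow lam n hn1
    simp only [hf] at hflam
    linarith [hflam, hs]
  constructor
  · funext x
    have e3 : S₁ = fun y => lam * y + (-1) := by
      funext y; show lam * y - 1 = lam * y + (-1); ring
    have e1 : S₂ = fun y => lam * y + 1 := rfl
    have hpown : lam * lam ^ (n-1) = lam ^ n := by
      rw [← pow_succ', Nat.sub_add_cancel hn1]
    simp only [Function.comp_apply, e1, e3]
    rw [iter_affine lam 1, iter_affine lam (-1)]
    linear_combination (-2) * hpown + 2 * hkey
  · have h6 : 4 * (n:ℝ) + 5 ≤ 2 ^ n := by exact_mod_cast nat_ineq2 n hn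
    have h3 := hcn (n + 1)
    push_cast at h3
    have expand : (2:ℝ) ^ (n+1) * (1 + ((n:ℝ)+1) * (-(2 / 2 ^ n)))
        = 2 * 2 ^ n - (4 * n + 4) := by
      rw [pow_succ]; field_simp; ring
    have hc2n : (2:ℝ) ^ n < c ^ (n + 1) := by
      calc (2:ℝ) ^ n < 2 * 2 ^ n - (4 * (n:ℝ) + 4) := by linarith
        _ = 2 ^ (n+1) * (1 + ((n:ℝ)+1) * (-(2 / 2 ^ n))) := expand.symm
        _ ≤ c ^ (n+1) := h3
    have hβn : (2:ℝ) ^ n < β ^ (n + 1) :=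
      lt_of_lt_of_le hc2n (pow_le_pow_left₀ hcpos.le hβc _)
    have hlp : (0:ℝ) < lam ^ (n+1) := pow_pos hlampos _
    have hfin : lam ^ (n+1) < 1 / 2 ^ n := by
      rw [lt_div_iff₀ h2npos]
      calc lam ^ (n+1) * 2 ^ n < lam ^ (n+1) * β ^ (n+1) :=
        (mul_lt_mul_iff_right₀ hlp).mpr hβn
        _ = 1 := hpowa
    have h2eq : (2:ℝ) / 2 ^ (n+1) = 1 / 2 ^ n := by rw [pow_succ]; ring
    rw [gt_iff_lt, h2eq]
    exact hfin
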